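/- The boundary flow determines the shape. Let f be a flow on a valid ladder presentation P of length s (parameters n, ℓ, m) with terminal tuple S = S^{(s)}. Then for every component index t ∈ {1,…,n}, the set { p ∈ {1,…,m} : t ∈ S_p } has exactly ℓ elements, say p_1 < p_2 < ⋯ < p_ℓ, and the t-th component of the shape of ι(P,f) is the partition whose r-th part equals p_{ℓ+1−r} − (ℓ+1−r) for r = 1,…,ℓ. In particular, the shape of ι(P,f) depends only on the terminal tuple S, and terminal tuples determine shapes bijectively. -/

import Mathlib

open scoped Classical

namespace SlnWeb

noncomputable section

/-- `p r` is the length of the `r`-th row (0-indexed) of a Young diagram. -/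
def IsPartition (p : ℕ → ℕ) : Prop :=
  Antitone p ∧ ∃ N, p N = 0

/-- The 0-indexed cell `(r, c)` lies in the Young diagram of `p`. -/
def InDiag (p : ℕ → ℕ) (r c : ℕ) : Prop :=
  c < p r

/-- Residue (with shift `ℓ`) of the 0-indexed cell `(r, c)`; for the
corresponding 1-indexed cell `(r+1, c+1)` this is `(c+1) - (r+1) + ℓ`. -/
def resOf (ℓ : ℕ) (r c : ℕ) : ℤ :=
  (c : ℤ) - (r : ℤ) + (ℓ : ℤ)

/-- `(r, c)` (0-indexed) is an addable cell of `p`. -/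
def IsAddableCell (p : ℕ → ℕ) (r c : ℕ) : Prop :=
  c = p r ∧ (r = 0 ∨ p r < p (r - 1))

/-- `(r, c)` (0-indexed) is a removable cell of `p`. -/
def IsRemovableCell (p : ℕ → ℕ) (r c : ℕ) : Prop :=
  c + 1 = p r ∧ p (r + 1) < p r

/-- Add to `p` its (unique) addable cell of residue `k`, if there is one. -/
def addRes (ℓ : ℕ) (p : ℕ → ℕ) (k : ℤ) : ℕ → ℕ :=
  if h : ∃ r, (r = 0 ∨ p r < p (r - 1)) ∧ (p r : ℤ) - (r : ℤ) + (ℓ : ℤ) = k then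
    Function.update p h.choose (p h.choose + 1)
  else p

/-- A multitableau: `shape t r` is the length of the `r`-th row (0-indexed) of
the `t`-th component (components are indexed by `t ∈ {1,…,n}`), and
`entry t r c` is the entry of the 0-indexed cell `(r, c)` of the `t`-th
component; everything is normalised to `0` outside of the diagrams. -/
structure MultiTableau where
  shape : ℕ → ℕ → ℕ
  entry : ℕ → ℕ → ℕ → ℕ

/-- A standard `n`-multitableau with entries in `{1,…,s}` (residue shift `ℓ`):
each component is a partition, components are normalised to be empty outside
of `{1,…,n}`, entries lie in `{1,…,s}` and are normalised to `0` outside the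
diagram, entries strictly increase along rows and down columns, no entry is
repeated inside a single component, and all nodes carrying the same entry have
the same residue. -/
def IsStandard (n ℓ s : ℕ) (M : MultiTableau) : Prop :=
  (∀ t, IsPartition (M.shape t)) ∧
  (∀ t, (t = 0 ∨ n < t) → ∀ r, M.shape t r = 0) ∧
  (∀ t r c, InDiag (M.shape t) r c → 1 ≤ M.entry t r c ∧ M.entry t r c ≤ s) ∧
  (∀ t r c, ¬ InDiag (M.shape t) r c → M.entry t r c = 0) ∧
  (∀ t r c c', c < c' → InDiag (M.shape t) r c' → M.entry t r c < M.entry t r c') ∧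
  (∀ t r r' c, r < r' → InDiag (M.shape t) r' c → M.entry t r c < M.entry t r' c) ∧
  (∀ t r c r' c', InDiag (M.shape t) r c → InDiag (M.shape t) r' c' →
    M.entry t r c = M.entry t r' c' → r = r' ∧ c = c') ∧
  (∀ t r c t' r' c', InDiag (M.shape t) r c → InDiag (M.shape t') r' c' →
    M.entry t r c = M.entry t' r' c' → resOf ℓ r c = resOf ℓ r' c')

/-- A ladder presentation of length `s` for the parameters `n`, `ℓ`, `m`:
the `r`-th step is `F_{i_r}^{(j_r)}` with `i_r = res r ∈ {1,…,m-1}` and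
`j_r = mult r ∈ {1,…,n}`. -/
structure LadderPresentation (n ℓ m s : ℕ) where
  res : Fin s → ℕ
  mult : Fin s → ℕ
  res_pos : ∀ r, 1 ≤ res r
  res_lt : ∀ r, res r < m
  mult_pos : ∀ r, 1 ≤ mult r
  mult_le : ∀ r, mult r ≤ n

/-- The weight sequence `k⁽⁰⁾, k⁽¹⁾, …` of a ladder presentation; positions `p`
are 1-indexed, `k⁽⁰⁾ = (n^ℓ)` and `k⁽ʳ⁾ = k⁽ʳ⁻¹⁾ - j_r·e_{i_r} + j_r·e_{i_r+1}`. -/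
def wtSeq {n ℓ m s : ℕ} (P : LadderPresentation n ℓ m s) : ℕ → ℕ → ℤ
  | 0, p => if 1 ≤ p ∧ p ≤ ℓ then (n : ℤ) else 0
  | r + 1, p =>
    if h : r < s then
      wtSeq P r p - (if p = P.res ⟨r, h⟩ then (P.mult ⟨r, h⟩ : ℤ) else 0) +
        (if p = P.res ⟨r, h⟩ + 1 then (P.mult ⟨r, h⟩ : ℤ) else 0)
    else wtSeq P r p

/-- A ladder presentation is valid if every entry of every weight in its weight
sequence lies in `{0,…,n}`. -/
def IsValid {n ℓ m s : ℕ} (P : LadderPresentation n ℓ m s) : Prop :=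
  ∀ r, r ≤ s → ∀ p, 1 ≤ p → p ≤ m → 0 ≤ wtSeq P r p ∧ wtSeq P r p ≤ (n : ℤ)

/-- A flow on a (valid) ladder presentation `P`.  `S r p ⊆ {1,…,n}` is the flow
label of the `p`-th boundary point after `r` steps (normalised to `∅` outside
`p ∈ {1,…,m}`), and `T r` is the flow label of the rung of the `r`-th ladder. -/
structure LadderFlow {n ℓ m s : ℕ} (P : LadderPresentation n ℓ m s) where
  S : Fin (s + 1) → ℕ → Finset ℕ
  T : Fin s → Finset ℕ
  S_sub : ∀ r p, S r p ⊆ Finset.Icc 1 n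
  S_outside : ∀ r p, (p = 0 ∨ m < p) → S r p = ∅
  S_card : ∀ r p, 1 ≤ p → p ≤ m → ((S r p).card : ℤ) = wtSeq P r.val p
  S_init : ∀ p, 1 ≤ p → p ≤ m → S 0 p = if p ≤ ℓ then Finset.Icc 1 n else ∅
  T_sub : ∀ r : Fin s, T r ⊆ S r.castSucc (P.res r)
  T_card : ∀ r : Fin s, (T r).card = P.mult r
  T_disj : ∀ r : Fin s, Disjoint (T r) (S r.castSucc (P.res r + 1))
  S_step_res : ∀ r : Fin s, S r.succ (P.res r) = S r.castSucc (P.res r) \ T r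
  S_step_res1 : ∀ r : Fin s, S r.succ (P.res r + 1) = S r.castSucc (P.res r + 1) ∪ T r
  S_step_other : ∀ r : Fin s, ∀ p, p ≠ P.res r → p ≠ P.res r + 1 →
    S r.succ p = S r.castSucc p

/-- Add, for every component `t ∈ Tset`, the (unique) addable cell of residue
`k` of that component, giving each of the new cells the entry `e`. -/
def stepAdd (ℓ : ℕ) (k : ℤ) (e : ℕ) (Tset : Finset ℕ) (M : MultiTableau) :
    MultiTableau where
  shape := fun t => if t ∈ Tset then addRes ℓ (M.shape t) k else M.shape t
  entry := fun t r c =>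
    if t ∈ Tset ∧ M.shape t r ≤ c ∧ c < addRes ℓ (M.shape t) k r then e
    else M.entry t r c

/-- The sequence of intermediate multitableaux built by the filling map `ι`:
at step `r` (0-indexed), for each `t ∈ T r`, the unique addable node of residue
`i_r` is added to the `t`-th component, with entry `r + 1`. -/
def iotaAux {n ℓ m s : ℕ} (P : LadderPresentation n ℓ m s) (f : LadderFlow P) :
    ℕ → MultiTableau
  | 0 => ⟨fun _ _ => 0, fun _ _ _ => 0⟩
  | r + 1 =>
    if h : r < s then
      stepAdd ℓ (P.res ⟨r, h⟩ : ℤ) (r + 1) (f.T ⟨r, h⟩) (iotaAux P f r)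
    else iotaAux P f r

/-- The filling map `ι`. -/
def iotaMap {n ℓ m s : ℕ} (P : LadderPresentation n ℓ m s) (f : LadderFlow P) :
    MultiTableau :=
  iotaAux P f s

/-- Every entry of `{1,…,s}` occurs in `M`. -/
def AllEntriesOccur (s : ℕ) (M : MultiTableau) : Prop :=
  ∀ e, 1 ≤ e → e ≤ s → ∃ t r c, InDiag (M.shape t) r c ∧ M.entry t r c = e

/-- All nodes of `M` have residue in `{1,…,m-1}`. -/
def ResInRange (ℓ m : ℕ) (M : MultiTableau) : Prop :=
  ∀ t r c, InDiag (M.shape t) r c → 1 ≤ resOf ℓ r c ∧ resOf ℓ r c ≤ (m : ℤ) - 1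

/-- `(P, f)` is the image of the multitableau `M` under the growth map `g`:
`i_r` is the common residue of the nodes of `M` with entry `r`, and `T r` is
the set of components of `M` containing a node with entry `r` (the remaining
data of `f`, i.e. the tuples `S`, is forced by the flow conditions, and
`j_r = |T r|` is forced by the flow condition `T_card`). -/
def GrowthData {n ℓ m s : ℕ} (M : MultiTableau) (P : LadderPresentation n ℓ m s)
    (f : LadderFlow P) : Prop :=
  (∀ r : Fin s, ∀ t r' c, InDiag (M.shape t) r' c → M.entry t r' c = r.val + 1 →
    (P.res r : ℤ) = resOf ℓ r' c) ∧
  (∀ r : Fin s, ∀ t,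
    t ∈ f.T r ↔ ∃ r' c, InDiag (M.shape t) r' c ∧ M.entry t r' c = r.val + 1)

/-- `#{(a,b) ∈ A × B : a < b}`. -/
def inv2 (A B : Finset ℕ) : ℕ :=
  ((A ×ˢ B).filter fun ab => ab.1 < ab.2).card

/-- The weight of a flow:
`wt(f) = Σ_r ( inv(S⁽ʳ⁾_{i_r}, T_r) − inv(S⁽ʳ⁻¹⁾_{i_r+1}, T_r) )`. -/
def wtFlow {n ℓ m s : ℕ} (P : LadderPresentation n ℓ m s) (f : LadderFlow P) : ℤ :=
  ∑ r : Fin s,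
    ((inv2 (f.S r.succ (P.res r)) (f.T r) : ℤ) -
      (inv2 (f.S r.castSucc (P.res r + 1)) (f.T r) : ℤ))

/-- The components of `M` (among `{1,…,n}`) containing a node with entry `j`. -/
def compsWith (n : ℕ) (M : MultiTableau) (j : ℕ) : Finset ℕ :=
  (Finset.Icc 1 n).filter fun t => ∃ r c, InDiag (M.shape t) r c ∧ M.entry t r c = j

/-- The shape of `M` with all entries `> j` removed, where moreover in the
components outside `Keep` the nodes with entry `j` are removed as well. -/
def shapeTrunc (M : MultiTableau) (j : ℕ) (Keep : Finset ℕ) : ℕ → ℕ → ℕ :=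
  fun t r =>
    ((Finset.range (M.shape t r)).filter fun c =>
      M.entry t r c ≤ (if t ∈ Keep then j else j - 1)).card

/-- The row of the node with entry `j` in component `t` of `M`. -/
def nodeRow (M : MultiTableau) (j t : ℕ) : ℕ :=
  if h : ∃ r c, InDiag (M.shape t) r c ∧ M.entry t r c = j then h.choose else 0

/-- The column of the node with entry `j` in component `t` of `M`. -/
def nodeCol (M : MultiTableau) (j t : ℕ) : ℕ :=
  if h : ∃ r c, InDiag (M.shape t) r c ∧ M.entry t r c = j then
    h.choose_spec.choose
  else 0

/-- The number of addable nodes of `sh` of residue `ρ` lying strictly after the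
position `(t, r)` in the order `⪯` (at most one addable node of a given residue
per component). -/
def cntAddAfter (n ℓ : ℕ) (sh : ℕ → ℕ → ℕ) (ρ : ℤ) (t r : ℕ) : ℕ :=
  ((Finset.Icc 1 n).filter fun t' => ∃ r' c', IsAddableCell (sh t') r' c' ∧
    resOf ℓ r' c' = ρ ∧ (t' < t ∨ (t' = t ∧ r < r'))).card

/-- The number of removable nodes of `sh` of residue `ρ` lying strictly after
the position `(t, r)` in the order `⪯`. -/
def cntRemAfter (n ℓ : ℕ) (sh : ℕ → ℕ → ℕ) (ρ : ℤ) (t r : ℕ) : ℕ :=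
  ((Finset.Icc 1 n).filter fun t' => ∃ r' c', IsRemovableCell (sh t') r' c' ∧
    resOf ℓ r' c' = ρ ∧ (t' < t ∨ (t' = t ∧ r < r'))).card

/-- The contribution `deg(Tʲ)` of the entry `j` to the Brundan–Kleshchev–Wang
degree of the standard multitableau `M`: listing the nodes with entry `j` as
`N₁ ≺ ⋯ ≺ N_t` (i.e. by decreasing component index), it is
`Σ_p (A_p − R_p) − t(t−1)/2`, where `A_p` (resp. `R_p`) is the number of
addable (resp. removable) nodes of the residue of `N_p`, strictly after `N_p`,
of the multipartition underlying `Tʲ` with the nodes `N_{p+1},…,N_t` removed. -/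
def degStep (n ℓ : ℕ) (M : MultiTableau) (j : ℕ) : ℤ :=
  (∑ t ∈ compsWith n M j,
    ((cntAddAfter n ℓ (shapeTrunc M j ((compsWith n M j).filter fun t' => t ≤ t'))
        (resOf ℓ (nodeRow M j t) (nodeCol M j t)) t (nodeRow M j t) : ℤ) -
      (cntRemAfter n ℓ (shapeTrunc M j ((compsWith n M j).filter fun t' => t ≤ t'))
        (resOf ℓ (nodeRow M j t) (nodeCol M j t)) t (nodeRow M j t) : ℤ))) -
  (((compsWith n M j).card * ((compsWith n M j).card - 1) / 2 : ℕ) : ℤ)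

/-- The Brundan–Kleshchev–Wang degree of a standard multitableau with entries
in `{1,…,s}`. -/
def degBKW (n ℓ s : ℕ) (M : MultiTableau) : ℤ :=
  ∑ j ∈ Finset.Icc 1 s, degStep n ℓ M j

/-- `M` has the residue sequence `((i_1,j_1),…,(i_s,j_s))` recorded by `P`:
for each `r`, exactly `j_r` nodes of `M` carry the entry `r` (equivalently,
under standardness, `j_r` components contain the entry `r`) and they all have
residue `i_r`. -/
def HasResSeq {n ℓ m s : ℕ} (P : LadderPresentation n ℓ m s) (M : MultiTableau) :
    Prop :=
  ∀ r : Fin s,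
    (compsWith n M (r.val + 1)).card = P.mult r ∧
    ∀ t r' c, InDiag (M.shape t) r' c → M.entry t r' c = r.val + 1 →
      resOf ℓ r' c = (P.res r : ℤ)

/-- The multipartition `λ(S)` determined by a boundary tuple `S`: writing
`p_1 < ⋯ < p_ℓ` for the elements of `{ p ∈ {1,…,m} : t ∈ S p }`, the `r`-th
part (1-indexed) of its `t`-th component is `p_{ℓ+1−r} − (ℓ+1−r)`. -/
def shapeOfTuple (ℓ m : ℕ) (Sb : ℕ → Finset ℕ) : ℕ → ℕ → ℕ :=
  fun t r =>
    if r < ℓ then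
      (((Finset.Icc 1 m).filter fun p => t ∈ Sb p).sort (· ≤ ·)).getD (ℓ - 1 - r) 0 -
        (ℓ - r)
    else 0


lemma betaInj (ℓ : ℕ) (q : ℕ → ℕ) (hq : Antitone q) :
    ∀ a b, a < ℓ → b < ℓ → q a + (ℓ - a) = q b + (ℓ - b) → a = b := by
  intro a b ha hb h
  rcases lt_trichotomy a b with hab | hab | hab
  · have := hq hab.le; omega
  · exact hab
  · have := hq hab.le; omega

lemma sort_image (ℓ : ℕ) (q : ℕ → ℕ) (hq : Antitone q) :
    (((Finset.range ℓ).image fun i => q i + (ℓ - i)).sort (· ≤ ·)) =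
      (List.range ℓ).map fun k => q (ℓ - 1 - k) + (ℓ - (ℓ - 1 - k)) := by
  set β : ℕ → ℕ := fun i => q i + (ℓ - i) with hβ
  have hdec : ∀ a b, a < b → b < ℓ → β b < β a := by
    intro a b hab hb
    have := hq hab.le
    simp only [hβ]; omega
  set L : List ℕ := (List.range ℓ).map fun k => β (ℓ - 1 - k) with hL
  have hnodup : L.Nodup := by
    refine List.Nodup.map_on ?_ (List.nodup_range (n := ℓ))
    intro a ha b hb h
    simp only [List.mem_range] at ha hb
    have := betaInj ℓ q hq (ℓ - 1 - a) (ℓ - 1 - b) (by omega) (by omega) h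
    omega
  have htf : L.toFinset = (Finset.range ℓ).image β := by
    ext p
    simp only [hL, List.mem_toFinset, List.mem_map, List.mem_range, Finset.mem_image,
      Finset.mem_range]
    constructor
    · rintro ⟨k, hk, e⟩; exact ⟨ℓ - 1 - k, by omega, e⟩
    · rintro ⟨j, hj, e⟩
      exact ⟨ℓ - 1 - j, by omega, by rw [show ℓ - 1 - (ℓ - 1 - j) = j by omega]; exact e⟩
  have hperm : (((Finset.range ℓ).image β).sort (· ≤ ·)).Perm L := by
    refine (Finset.sort_perm_toList _ (· ≤ ·)).trans ?_
    exact List.perm_of_nodup_nodup_toFinset_eq (Finset.nodup_toList _) hnodup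
      (by rw [Finset.toList_toFinset, htf])
  have hsorted : List.Pairwise (· ≤ ·) L := by
    refine List.pairwise_iff_getElem.2 ?_
    intro i j hi hj hij
    simp only [hL, List.length_map, List.length_range] at hi hj
    simp only [hL, List.getElem_map, List.getElem_range]
    exact le_of_lt (hdec (ℓ - 1 - j) (ℓ - 1 - i) (by omega) (by omega))
  exact List.Perm.eq_of_pairwise' (Finset.pairwise_sort _ _) hsorted hperm

lemma sort_image_getD (ℓ : ℕ) (q : ℕ → ℕ) (hq : Antitone q) (r0 : ℕ) (hr0 : r0 < ℓ) :
    ((((Finset.range ℓ).image fun i => q i + (ℓ - i)).sort (· ≤ ·)).getD (ℓ - 1 - r0) 0) =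
      q r0 + (ℓ - r0) := by
  rw [sort_image ℓ q hq,
    List.getD_eq_getElem _ _ (by simp only [List.length_map, List.length_range]; omega),
    List.getElem_map, List.getElem_range, show ℓ - 1 - (ℓ - 1 - r0) = r0 by omega]

lemma addRes_spec (ℓ : ℕ) (q : ℕ → ℕ) (i : ℕ) (hi : 1 ≤ i)
    (hq : Antitone q) (hq0 : ∀ row, ℓ ≤ row → q row = 0)
    (hmem : ∃ r0, r0 < ℓ ∧ q r0 + (ℓ - r0) = i)
    (hnot : ∀ r0, r0 < ℓ → q r0 + (ℓ - r0) ≠ i + 1) :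
    Antitone (addRes ℓ q i) ∧ (∀ row, ℓ ≤ row → addRes ℓ q i row = 0) ∧
    ∀ p, (p ∈ (Finset.range ℓ).image fun j => addRes ℓ q i j + (ℓ - j)) ↔
      ((p ∈ (Finset.range ℓ).image fun j => q j + (ℓ - j)) ∧ p ≠ i) ∨ p = i + 1 := by
  obtain ⟨r0, hr0, hβ0⟩ := hmem
  have hadd : r0 = 0 ∨ q r0 < q (r0 - 1) := by
    rcases Nat.eq_zero_or_pos r0 with h | h
    · exact Or.inl h
    · right
      have h1 := hq (show r0 - 1 ≤ r0 by omega)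
      have h2 := hnot (r0 - 1) (by omega)
      omega
  have hex : ∃ r, (r = 0 ∨ q r < q (r - 1)) ∧ (q r : ℤ) - (r : ℤ) + (ℓ : ℤ) = (i : ℤ) :=
    ⟨r0, hadd, by omega⟩
  have hch := hex.choose_spec
  have hchoose : hex.choose = r0 := by
    have h1 : hex.choose < ℓ := by
      by_contra h
      have := hq0 hex.choose (by omega)
      omega
    exact betaInj ℓ q hq _ r0 h1 hr0 (by have := hch.2; omega)
  have hupd : addRes ℓ q (i : ℤ) = Function.update q r0 (q r0 + 1) := by
    rw [addRes, dif_pos hex, hchoose]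
  have hq0' : q (r0 + 1) ≤ q r0 := hq (by omega)
  refine ⟨?_, ?_, ?_⟩
  · rw [hupd]
    apply antitone_nat_of_succ_le
    intro j
    rcases eq_or_ne (j + 1) r0 with h | h
    · rw [Function.update_apply, Function.update_apply, if_pos h, if_neg (by omega)]
      rcases hadd with h0 | h0
      · omega
      · rw [show j = r0 - 1 by omega]; omega
    · rcases eq_or_ne j r0 with h' | h'
      · rw [Function.update_apply, Function.update_apply, if_neg h, if_pos h', ← h']
        have := hq (show j ≤ j + 1 by omega); omega
      · rw [Function.update_apply, Function.update_apply, if_neg h, if_neg h']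
        exact hq (by omega)
  · intro row hrow
    rw [hupd, Function.update_apply, if_neg (by omega)]
    exact hq0 row hrow
  · intro p
    rw [hupd]
    simp only [Finset.mem_image, Finset.mem_range]
    constructor
    · rintro ⟨j, hj, e⟩
      rcases eq_or_ne j r0 with h | h
      · right; rw [h, Function.update_apply, if_pos rfl] at e; omega
      · rw [Function.update_apply, if_neg h] at e
        left
        refine ⟨⟨j, hj, e⟩, ?_⟩
        intro hpi
        exact h (betaInj ℓ q hq j r0 hj hr0 (by omega))
    · rintro (⟨⟨j, hj, e⟩, hpi⟩ | rfl)
      · have h : j ≠ r0 := by rintro rfl; omega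
        exact ⟨j, hj, by rw [Function.update_apply, if_neg h]; exact e⟩
      · exact ⟨r0, hr0, by rw [Function.update_apply, if_pos rfl]; omega⟩


lemma iotaAux_shape_outside {n ℓ m s : ℕ} (P : LadderPresentation n ℓ m s)
    (f : LadderFlow P) :
    ∀ k t, ¬ (1 ≤ t ∧ t ≤ n) → ∀ row, (iotaAux P f k).shape t row = 0 := by
  intro k
  induction k with
  | zero => intro t ht row; rfl
  | succ k ih =>
    intro t ht row
    by_cases h : k < s
    · have htT : t ∉ f.T ⟨k, h⟩ := by
        intro hmem
        have := f.S_sub (Fin.castSucc ⟨k, h⟩) (P.res ⟨k, h⟩) (f.T_sub ⟨k, h⟩ hmem)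
        rw [Finset.mem_Icc] at this
        exact ht this
      simp only [iotaAux, dif_pos h, stepAdd, if_neg htT]
      exact ih t ht row
    · simp only [iotaAux, dif_neg h]
      exact ih t ht row

lemma main_inv {n ℓ m s : ℕ} (hℓ : 1 ≤ ℓ) (hm : ℓ + 1 ≤ m)
    (P : LadderPresentation n ℓ m s) (f : LadderFlow P) :
    ∀ k (hk : k ≤ s), ∀ t, 1 ≤ t → t ≤ n →
      Antitone ((iotaAux P f k).shape t) ∧
      (∀ row, ℓ ≤ row → (iotaAux P f k).shape t row = 0) ∧
      ((Finset.Icc 1 m).filter fun p => t ∈ f.S ⟨k, Nat.lt_succ_of_le hk⟩ p) =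
        (Finset.range ℓ).image fun i => (iotaAux P f k).shape t i + (ℓ - i) := by
  intro k
  induction k with
  | zero =>
    intro hk t ht1 ht2
    have hsh : (iotaAux P f 0).shape t = fun _ => 0 := rfl
    refine ⟨by rw [hsh]; exact antitone_const, fun row _ => rfl, ?_⟩
    ext p
    simp only [hsh, Finset.mem_filter, Finset.mem_Icc, Finset.mem_image, Finset.mem_range]
    constructor
    · rintro ⟨⟨hp1, hpm⟩, hmem⟩
      rw [show (⟨0, Nat.lt_succ_of_le hk⟩ : Fin (s + 1)) = 0 from rfl,
        f.S_init p hp1 hpm] at hmem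
      by_cases hpl : p ≤ ℓ
      · rw [if_pos hpl] at hmem
        exact ⟨ℓ - p, by omega, by omega⟩
      · rw [if_neg hpl] at hmem
        exact absurd hmem (Finset.notMem_empty t)
    · rintro ⟨j, hj, e⟩
      refine ⟨⟨by omega, by omega⟩, ?_⟩
      rw [show (⟨0, Nat.lt_succ_of_le hk⟩ : Fin (s + 1)) = 0 from rfl,
        f.S_init p (by omega) (by omega), if_pos (by omega), Finset.mem_Icc]
      exact ⟨ht1, ht2⟩
  | succ k ih =>
    intro hk t ht1 ht2
    have hks : k < s := hk
    obtain ⟨hA, hZ, hB⟩ := ih (le_of_lt hks) t ht1 ht2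
    set r : Fin s := ⟨k, hks⟩ with hr
    have hBc : ((Finset.Icc 1 m).filter fun p => t ∈ f.S r.castSucc p) =
        (Finset.range ℓ).image fun i => (iotaAux P f k).shape t i + (ℓ - i) := hB
    have hiota : iotaAux P f (k + 1) =
        stepAdd ℓ (P.res r : ℤ) (k + 1) (f.T r) (iotaAux P f k) := by
      simp only [iotaAux, dif_pos hks]; rfl
    set i := P.res r with hi
    have hi1 : 1 ≤ i := P.res_pos r
    have him : i < m := P.res_lt r
    have hsuccS : ∀ p, t ∈ f.S r.succ p ↔
        ((t ∈ f.S r.castSucc p ∧ (t ∈ f.T r → p ≠ i)) ∨ (t ∈ f.T r ∧ p = i + 1)) := by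
      intro p
      by_cases hp : p = i
      · subst hp
        rw [f.S_step_res r, Finset.mem_sdiff]
        constructor
        · rintro ⟨h1, h2⟩; exact Or.inl ⟨h1, fun hT _ => h2 hT⟩
        · rintro (⟨h1, h2⟩ | ⟨h1, h2⟩)
          · exact ⟨h1, fun hT => (h2 hT) rfl⟩
          · omega
      · by_cases hp1 : p = i + 1
        · subst hp1
          rw [f.S_step_res1 r, Finset.mem_union]
          constructor
          · rintro (h1 | h1)
            · exact Or.inl ⟨h1, fun _ => hp⟩
            · exact Or.inr ⟨h1, rfl⟩
          · rintro (⟨h1, _⟩ | ⟨h1, _⟩)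
            · exact Or.inl h1
            · exact Or.inr h1
        · rw [f.S_step_other r p hp hp1]
          constructor
          · intro h1; exact Or.inl ⟨h1, fun _ => hp⟩
          · rintro (⟨h1, _⟩ | ⟨_, h2⟩)
            · exact h1
            · exact absurd h2 hp1
    by_cases hT : t ∈ f.T r
    · have hshape : (iotaAux P f (k + 1)).shape t =
          addRes ℓ ((iotaAux P f k).shape t) (i : ℤ) := by
        rw [hiota]; simp only [stepAdd, if_pos hT]
      have htSi : t ∈ f.S r.castSucc i := f.T_sub r hT
      have htSi1 : t ∉ f.S r.castSucc (i + 1) := Finset.disjoint_left.1 (f.T_disj r) hT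
      have hiB : i ∈ (Finset.range ℓ).image fun j => (iotaAux P f k).shape t j + (ℓ - j) := by
        rw [← hBc, Finset.mem_filter, Finset.mem_Icc]
        exact ⟨⟨hi1, le_of_lt him⟩, htSi⟩
      rw [Finset.mem_image] at hiB
      obtain ⟨r0, hr0, hβ0⟩ := hiB
      rw [Finset.mem_range] at hr0
      have hnot : ∀ r1, r1 < ℓ → (iotaAux P f k).shape t r1 + (ℓ - r1) ≠ i + 1 := by
        intro r1 h1 he
        have hmem : i + 1 ∈ (Finset.range ℓ).image
            fun j => (iotaAux P f k).shape t j + (ℓ - j) :=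
          Finset.mem_image.2 ⟨r1, Finset.mem_range.2 h1, he⟩
        rw [← hBc, Finset.mem_filter] at hmem
        exact htSi1 hmem.2
      obtain ⟨hA', hZ', hIff⟩ := addRes_spec ℓ _ i hi1 hA hZ ⟨r0, hr0, hβ0⟩ hnot
      refine ⟨by rw [hshape]; exact hA', by rw [hshape]; exact hZ', ?_⟩
      ext p
      simp only [hshape]
      rw [hIff p, ← hBc, Finset.mem_filter, Finset.mem_filter, Finset.mem_Icc]
      rw [show (⟨k + 1, Nat.lt_succ_of_le hk⟩ : Fin (s + 1)) = r.succ from rfl, hsuccS p]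
      constructor
      · rintro ⟨⟨hp1, hpm⟩, (⟨h1, h2⟩ | ⟨_, h2⟩)⟩
        · exact Or.inl ⟨⟨⟨hp1, hpm⟩, h1⟩, h2 hT⟩
        · exact Or.inr h2
      · rintro (⟨⟨⟨hp1, hpm⟩, h1⟩, h2⟩ | rfl)
        · exact ⟨⟨hp1, hpm⟩, Or.inl ⟨h1, fun _ => h2⟩⟩
        · exact ⟨⟨by omega, by omega⟩, Or.inr ⟨hT, rfl⟩⟩
    · have hshape : (iotaAux P f (k + 1)).shape t = (iotaAux P f k).shape t := by
        rw [hiota]; simp only [stepAdd, if_neg hT]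
      refine ⟨by rw [hshape]; exact hA, by rw [hshape]; exact hZ, ?_⟩
      rw [show (fun i => (iotaAux P f (k + 1)).shape t i + (ℓ - i)) =
        fun i => (iotaAux P f k).shape t i + (ℓ - i) by funext j; rw [hshape], ← hBc]
      ext p
      simp only [Finset.mem_filter]
      rw [show (⟨k + 1, Nat.lt_succ_of_le hk⟩ : Fin (s + 1)) = r.succ from rfl, hsuccS p]
      constructor
      · rintro ⟨hpm, (⟨h1, _⟩ | ⟨h1, _⟩)⟩
        · exact ⟨hpm, h1⟩
        · exact absurd h1 hT
      · rintro ⟨hpm, h1⟩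
        exact ⟨hpm, Or.inl ⟨h1, fun h => absurd h hT⟩⟩

lemma card_eq {n ℓ m s : ℕ} (hℓ : 1 ≤ ℓ) (hm : ℓ + 1 ≤ m)
    (P : LadderPresentation n ℓ m s) (f : LadderFlow P) (t : ℕ)
    (ht1 : 1 ≤ t) (ht2 : t ≤ n) :
    ((Finset.Icc 1 m).filter fun p => t ∈ f.S (Fin.last s) p).card = ℓ := by
  have hB := (main_inv hℓ hm P f s le_rfl t ht1 ht2).2.2
  have hA := (main_inv hℓ hm P f s le_rfl t ht1 ht2).1
  rw [show (Fin.last s) = (⟨s, Nat.lt_succ_of_le le_rfl⟩ : Fin (s + 1)) from rfl, hB]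
  rw [Finset.card_image_of_injOn, Finset.card_range]
  intro a ha b hb h
  rw [Finset.mem_coe, Finset.mem_range] at ha hb
  exact betaInj ℓ _ hA a b ha hb h

lemma shape_formula {n ℓ m s : ℕ} (hℓ : 1 ≤ ℓ) (hm : ℓ + 1 ≤ m)
    (P : LadderPresentation n ℓ m s) (f : LadderFlow P) (t : ℕ)
    (ht1 : 1 ≤ t) (ht2 : t ≤ n) (r : ℕ) (hr1 : 1 ≤ r) (hr2 : r ≤ ℓ) :
    ((iotaMap P f).shape t (r - 1) : ℤ) =
      ((((Finset.Icc 1 m).filter fun p =>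
          t ∈ f.S (Fin.last s) p).sort (· ≤ ·)).getD (ℓ - r) 0 : ℤ) -
        ((ℓ : ℤ) + 1 - (r : ℤ)) := by
  have hB := (main_inv hℓ hm P f s le_rfl t ht1 ht2).2.2
  have hA := (main_inv hℓ hm P f s le_rfl t ht1 ht2).1
  rw [show (Fin.last s) = (⟨s, Nat.lt_succ_of_le le_rfl⟩ : Fin (s + 1)) from rfl, hB,
    show ℓ - r = ℓ - 1 - (r - 1) by omega,
    sort_image_getD ℓ _ hA (r - 1) (by omega)]
  have : (iotaMap P f).shape t (r - 1) = (iotaAux P f s).shape t (r - 1) := rfl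
  rw [this]
  omega

lemma shape_zero {n ℓ m s : ℕ} (hℓ : 1 ≤ ℓ) (hm : ℓ + 1 ≤ m)
    (P : LadderPresentation n ℓ m s) (f : LadderFlow P) (t : ℕ)
    (ht1 : 1 ≤ t) (ht2 : t ≤ n) (r : ℕ) (hr : ℓ ≤ r) :
    (iotaMap P f).shape t r = 0 :=
  (main_inv hℓ hm P f s le_rfl t ht1 ht2).2.1 r hr

/-!
STATEMENT 5: The boundary flow determines the shape.  For every component
`t ∈ {1,…,n}` the set `{ p ∈ {1,…,m} : t ∈ S_p }` (for the terminal tuple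
`S = S⁽ˢ⁾`) has exactly `ℓ` elements `p_1 < ⋯ < p_ℓ`, and the `t`-th component
of the shape of `ι(P,f)` is the partition whose `r`-th part equals
`p_{ℓ+1−r} − (ℓ+1−r)` for `r = 1,…,ℓ` (and whose later parts vanish).  In
particular the shape of `ι(P,f)` depends only on the terminal tuple, and
terminal tuples determine shapes bijectively.
-/
theorem shape_from_boundary (n ℓ m : ℕ) (hn : 2 ≤ n) (hℓ : 1 ≤ ℓ)
    (hm : ℓ + 1 ≤ m) (s : ℕ) (P : LadderPresentation n ℓ m s) (hP : IsValid P)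
    (f : LadderFlow P) :
    (∀ t, 1 ≤ t → t ≤ n →
      ((Finset.Icc 1 m).filter fun p => t ∈ f.S (Fin.last s) p).card = ℓ ∧
      (∀ r, 1 ≤ r → r ≤ ℓ →
        ((iotaMap P f).shape t (r - 1) : ℤ) =
          ((((Finset.Icc 1 m).filter fun p =>
              t ∈ f.S (Fin.last s) p).sort (· ≤ ·)).getD (ℓ - r) 0 : ℤ) -
            ((ℓ : ℤ) + 1 - (r : ℤ))) ∧
      (∀ r, ℓ ≤ r → (iotaMap P f).shape t r = 0)) ∧
    (∀ (s' : ℕ) (P' : LadderPresentation n ℓ m s'), IsValid P' →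
      ∀ f' : LadderFlow P',
        ((iotaMap P f).shape = (iotaMap P' f').shape ↔
          f.S (Fin.last s) = f'.S (Fin.last s'))) := by
  constructor
  · intro t ht1 ht2
    exact ⟨card_eq hℓ hm P f t ht1 ht2,
      fun r hr1 hr2 => shape_formula hℓ hm P f t ht1 ht2 r hr1 hr2,
      fun r hr => shape_zero hℓ hm P f t ht1 ht2 r hr⟩
  · intro s' P' hP' f'
    constructor
    · intro hsh
      funext p
      ext t0
      by_cases ht : 1 ≤ t0 ∧ t0 ≤ n
      · by_cases hp : 1 ≤ p ∧ p ≤ m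
        · have hB := (main_inv hℓ hm P f s le_rfl t0 ht.1 ht.2).2.2
          have hB' := (main_inv hℓ hm P' f' s' le_rfl t0 ht.1 ht.2).2.2
          have hsh2 : ∀ j, (iotaAux P f s).shape t0 j = (iotaAux P' f' s').shape t0 j :=
            fun j => congrFun (congrFun hsh t0) j
          have himg : ((Finset.range ℓ).image fun i =>
              (iotaAux P f s).shape t0 i + (ℓ - i)) =
              (Finset.range ℓ).image fun i => (iotaAux P' f' s').shape t0 i + (ℓ - i) :=
            Finset.image_congr (fun x _ => by rw [hsh2 x])
          have e1 : t0 ∈ f.S (Fin.last s) p ↔ p ∈ ((Finset.Icc 1 m).filter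
              fun q => t0 ∈ f.S (Fin.last s) q) := by
            simp [Finset.mem_filter, Finset.mem_Icc, hp.1, hp.2]
          have e2 : t0 ∈ f'.S (Fin.last s') p ↔ p ∈ ((Finset.Icc 1 m).filter
              fun q => t0 ∈ f'.S (Fin.last s') q) := by
            simp [Finset.mem_filter, Finset.mem_Icc, hp.1, hp.2]
          rw [e1, e2, show (Fin.last s) = (⟨s, Nat.lt_succ_of_le le_rfl⟩ : Fin (s + 1))
              from rfl,
            show (Fin.last s') = (⟨s', Nat.lt_succ_of_le le_rfl⟩ : Fin (s' + 1)) from rfl,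
            hB, hB', himg]
        · rw [f.S_outside _ p (by omega), f'.S_outside _ p (by omega)]
      · constructor
        · intro h
          have := f.S_sub (Fin.last s) p h
          rw [Finset.mem_Icc] at this
          exact absurd this ht
        · intro h
          have := f'.S_sub (Fin.last s') p h
          rw [Finset.mem_Icc] at this
          exact absurd this ht
    · intro hS
      funext t0 row
      by_cases ht : 1 ≤ t0 ∧ t0 ≤ n
      · by_cases hrow : row < ℓ
        · have h1 := shape_formula hℓ hm P f t0 ht.1 ht.2 (row + 1) (by omega) (by omega)
          have h2 := shape_formula hℓ hm P' f' t0 ht.1 ht.2 (row + 1) (by omega) (by omega)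
          rw [show row + 1 - 1 = row by omega] at h1 h2
          rw [hS] at h1
          have : ((iotaMap P f).shape t0 row : ℤ) = ((iotaMap P' f').shape t0 row : ℤ) := by
            rw [h1, h2]
          exact_mod_cast this
        · rw [shape_zero hℓ hm P f t0 ht.1 ht.2 row (by omega),
            shape_zero hℓ hm P' f' t0 ht.1 ht.2 row (by omega)]
      · show (iotaAux P f s).shape t0 row = (iotaAux P' f' s').shape t0 row
        rw [iotaAux_shape_outside P f s t0 ht row,
          iotaAux_shape_outside P' f' s' t0 ht row]


end

end SlnWeb
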